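/- Let p and q be coprime positive integers. Then A' ⊆ ℂ⁶ has exactly two irreducible components, namely A'_r and A'_c. Precisely: (i) A' = A'_r ∪ A'_c; (ii) the vanishing ideal of A'_r in the polynomial ring ℂ[x₁,…,x₆] is a prime ideal; (iii) the vanishing ideal of A'_c in ℂ[x₁,…,x₆] is a prime ideal; (iv) A'_r is not contained in A'_c and A'_c is not contained in A'_r. -/

import Mathlib

open MvPolynomial

lemma eval_aeval' {n m : ℕ} (y : Fin m → ℂ) (σ : Fin n → MvPolynomial (Fin m) ℂ)
    (f : MvPolynomial (Fin n) ℂ) :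
    eval y (aeval σ f) = eval (fun i => eval y (σ i)) f := by
  rw [aeval_def, eval_eval₂]
  have : (eval y).comp (algebraMap ℂ (MvPolynomial (Fin m) ℂ)) = RingHom.id ℂ := by
    ext c; simp [algebraMap_eq]
  rw [this, eval₂_id]

lemma vanishing_eq_ker {n m : ℕ} (σ : Fin n → MvPolynomial (Fin m) ℂ) (S : Set (Fin n → ℂ))
    (hmem : ∀ y : Fin m → ℂ, (fun i => eval y (σ i)) ∈ S)
    (hsur : ∀ x ∈ S, ∃ y : Fin m → ℂ, (fun i => eval y (σ i)) = x) :
    vanishingIdeal ℂ S = RingHom.ker (aeval σ : MvPolynomial (Fin n) ℂ →ₐ[ℂ] MvPolynomial (Fin m) ℂ) := by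
  ext f
  rw [mem_vanishingIdeal_iff, RingHom.mem_ker]
  constructor
  · intro h
    apply MvPolynomial.funext (R := ℂ)
    intro y
    rw [eval_aeval', map_zero]
    exact h _ (hmem y)
  · intro h x hx
    obtain ⟨y, rfl⟩ := hsur x hx
    show (eval fun i => eval y (σ i)) f = 0; rw [← eval_aeval', h, map_zero]

lemma vanishing_prime {n m : ℕ} (σ : Fin n → MvPolynomial (Fin m) ℂ) (S : Set (Fin n → ℂ))
    (hmem : ∀ y : Fin m → ℂ, (fun i => eval y (σ i)) ∈ S)
    (hsur : ∀ x ∈ S, ∃ y : Fin m → ℂ, (fun i => eval y (σ i)) = x) :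
    (vanishingIdeal ℂ S).IsPrime := by
  rw [vanishing_eq_ker σ S hmem hsur]
  exact RingHom.ker_isPrime _



/-- `A' = {x ∈ ℂ⁶ : p·x₄·x₂ − q·x₁·x₅ = 0 and p·x₄·x₃ − q·x₁·x₆ = 0}`
(coordinates `x₁,…,x₆` are `x 0, …, x 5`). -/
def setA' (p q : ℕ) : Set (Fin 6 → ℂ) :=
  {x | (p : ℂ) * x 3 * x 1 - (q : ℂ) * x 0 * x 4 = 0 ∧
       (p : ℂ) * x 3 * x 2 - (q : ℂ) * x 0 * x 5 = 0}

/-- `A'_r = {x ∈ ℂ⁶ : x₁ = 0 and x₄ = 0}`. -/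
def setA'r : Set (Fin 6 → ℂ) := {x | x 0 = 0 ∧ x 3 = 0}

/-- `A'_c = {x ∈ ℂ⁶ : p·x₄·x₂ − q·x₁·x₅ = 0, p·x₄·x₃ − q·x₁·x₆ = 0, x₂·x₆ − x₃·x₅ = 0}`. -/
def setA'c (p q : ℕ) : Set (Fin 6 → ℂ) :=
  {x | (p : ℂ) * x 3 * x 1 - (q : ℂ) * x 0 * x 4 = 0 ∧
       (p : ℂ) * x 3 * x 2 - (q : ℂ) * x 0 * x 5 = 0 ∧
       x 1 * x 5 - x 2 * x 4 = 0}

/-- For coprime positive integers `p` and `q`, `A'` has exactly the two irreducible components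
`A'_r` and `A'_c`: it is their union, the vanishing ideal of each is prime, and neither is
contained in the other. -/
theorem setA'_irreducible_components (p q : ℕ) (hp : 0 < p) (hq : 0 < q)
    (hpq : Nat.Coprime p q) :
    setA' p q = setA'r ∪ setA'c p q ∧
    (MvPolynomial.vanishingIdeal ℂ setA'r).IsPrime ∧
    (MvPolynomial.vanishingIdeal ℂ (setA'c p q)).IsPrime ∧
    ¬ setA'r ⊆ setA'c p q ∧ ¬ setA'c p q ⊆ setA'r := by
  have hp' : (p : ℂ) ≠ 0 := Nat.cast_ne_zero.mpr hp.ne'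
  have hq' : (q : ℂ) ≠ 0 := Nat.cast_ne_zero.mpr hq.ne'
  refine ⟨?_, ?_, ?_, ?_, ?_⟩
  · -- union
    ext x
    simp only [setA', setA'r, setA'c, Set.mem_union, Set.mem_setOf_eq]
    constructor
    · rintro ⟨h1, h2⟩
      by_cases h0 : x 0 = 0
      · by_cases h3 : x 3 = 0
        · exact Or.inl ⟨h0, h3⟩
        · right
          have hx1 : x 1 = 0 := by
            have e : (p : ℂ) * x 3 * x 1 = 0 := by rw [h0] at h1; linear_combination h1
            simpa [mul_eq_zero, hp', h3] using e
          have hx2 : x 2 = 0 := by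
            have e : (p : ℂ) * x 3 * x 2 = 0 := by rw [h0] at h2; linear_combination h2
            simpa [mul_eq_zero, hp', h3] using e
          exact ⟨h1, h2, by rw [hx1, hx2]; ring⟩
      · right
        by_cases h3 : x 3 = 0
        · have hx4 : x 4 = 0 := by
            have e : (q : ℂ) * x 0 * x 4 = 0 := by rw [h3] at h1; linear_combination -h1
            simpa [mul_eq_zero, hq', h0] using e
          have hx5 : x 5 = 0 := by
            have e : (q : ℂ) * x 0 * x 5 = 0 := by rw [h3] at h2; linear_combination -h2
            simpa [mul_eq_zero, hq', h0] using e
          exact ⟨h1, h2, by rw [hx4, hx5]; ring⟩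
        · refine ⟨h1, h2, ?_⟩
          have e : ((q : ℂ) * x 0) * (x 1 * x 5 - x 2 * x 4) = 0 := by
            linear_combination x 2 * h1 - x 1 * h2
          exact (mul_eq_zero.mp e).resolve_left (mul_ne_zero hq' h0)
    · rintro (⟨h0, h3⟩ | ⟨e1, e2, _⟩)
      · constructor <;> rw [h0, h3] <;> ring
      · exact ⟨e1, e2⟩
  · -- A'_r prime
    apply vanishing_prime (m := 6) (fun i => if i = 0 then 0 else if i = 3 then 0 else X i)
    · intro y
      constructor <;> simp
    · intro x hx
      refine ⟨x, funext fun i => ?_⟩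
      by_cases hi0 : i = 0
      · subst hi0; simpa using hx.1.symm
      by_cases hi3 : i = 3
      · subst hi3; simpa [hi0] using hx.2.symm
      simp [hi0, hi3]
  · -- A'_c prime
    apply vanishing_prime (m := 5) (fun i =>
      if i = 0 then X 0 * X 2 else
      if i = 1 then C (q : ℂ) * (X 0 * X 3) else
      if i = 2 then C (q : ℂ) * (X 0 * X 4) else
      if i = 3 then X 1 * X 2 else
      if i = 4 then C (p : ℂ) * (X 1 * X 3) else
      C (p : ℂ) * (X 1 * X 4))
    · intro y
      refine ⟨?_, ?_, ?_⟩ <;> simp <;> ring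
    · intro x hx
      obtain ⟨h1, h2, h3⟩ := hx
      have key : ∃ a b s t u : ℂ, a * s = x 0 ∧ (q : ℂ) * (a * t) = x 1 ∧
          (q : ℂ) * (a * u) = x 2 ∧
          b * s = x 3 ∧ (p : ℂ) * (b * t) = x 4 ∧ (p : ℂ) * (b * u) = x 5 := by
        by_cases h0 : x 0 = 0
        · by_cases hx1 : x 1 = 0
          · by_cases hx2 : x 2 = 0
            · exact ⟨0, 1, x 3, x 4 / p, x 5 / p, by simp [h0], by simp [hx1], by simp [hx2],
                by ring, by field_simp, by field_simp⟩
            · have h3' : x 3 = 0 := by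
                have e : (p : ℂ) * x 3 * x 2 = 0 := by rw [h0] at h2; linear_combination h2
                simpa [mul_eq_zero, hp', hx2] using e
              have h4' : x 4 = 0 := by
                have e : x 2 * x 4 = 0 := by rw [hx1] at h3; linear_combination -h3
                simpa [mul_eq_zero, hx2] using e
              refine ⟨1, (q : ℂ) * x 5 / ((p : ℂ) * x 2), 0, 0, x 2 / q, by simp [h0],
                by simp [hx1], by field_simp, by simp [h3'], by simp [h4'], ?_⟩
              field_simp
          · have h3' : x 3 = 0 := by
              have e : (p : ℂ) * x 3 * x 1 = 0 := by rw [h0] at h1; linear_combination h1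
              simpa [mul_eq_zero, hp', hx1] using e
            refine ⟨1, (q : ℂ) * x 4 / ((p : ℂ) * x 1), 0, x 1 / q, x 2 / q, by simp [h0],
              by field_simp, by field_simp, by simp [h3'], ?_, ?_⟩
            · field_simp
            · field_simp
              linear_combination -h3
        · refine ⟨1, x 3 / x 0, x 0, x 1 / q, x 2 / q, by ring, by field_simp, by field_simp,
            by field_simp, ?_, ?_⟩
          · field_simp
            linear_combination h1
          · field_simp
            linear_combination h2
      obtain ⟨a, b, s, t, u, e0, e1, e2, e3, e4, e5⟩ := key
      refine ⟨![a, b, s, t, u], funext fun i => ?_⟩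
      fin_cases i <;> simpa using by assumption
  · -- r not subset c
    intro h
    have hm : (fun i => if i = 1 ∨ i = 5 then 1 else 0 : Fin 6 → ℂ) ∈ setA'r := by
      constructor <;> simp
    have := (h hm).2.2
    simp at this
  · -- c not subset r
    intro h
    have hm : (fun i => if i = 0 then 1 else 0 : Fin 6 → ℂ) ∈ setA'c p q := by
      refine ⟨?_, ?_, ?_⟩ <;> simp
    have := (h hm).1
    simp at this
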